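/- Let X be a Polish metric space, H a real Hilbert space, and Φ : X → H a measurable map. Let 𝔐 be a set of Borel probability measures on X for which Φ is Bochner integrable, closed under convex combinations, and suppose the mean embedding m : P ∈ 𝔐 ↦ ∫ Φ dP ∈ H is injective on 𝔐. Define E(Q, P) = ‖ m(Q) − m(P) ‖_H. Let P₀, P₁ ∈ 𝔐 with D = E(P₀, P₁) < ∞ and let t ∈ [0, 1]. If P ∈ 𝔐 satisfies E(P₀, P) = t·D and E(P, P₁) = (1 − t)·D, then P = (1 − t)·P₀ + t·P₁. Consequently the mixture curve is the unique constant speed minimal geodesic joining P₀ and P₁ for the distance E. -/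

import Mathlib

open MeasureTheory TopologicalSpace

/-- **Uniqueness of MMD geodesics: they are mixtures.**
Let `Φ : X → H` be a measurable map into a real Hilbert space, `𝔐` a set of Borel
probability measures on which `Φ` is Bochner integrable, closed under convex
combinations, and on which the mean embedding `m : P ↦ ∫ Φ dP` is injective. Set
`E(Q,P) = ‖m(Q) − m(P)‖`. If `P₀, P₁ ∈ 𝔐`, `D = E(P₀,P₁)`, `t ∈ [0,1]`, and `P ∈ 𝔐`
satisfies `E(P₀,P) = t·D` and `E(P,P₁) = (1−t)·D`, then `P = (1−t)·P₀ + t·P₁`; hence the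
mixture curve is the unique constant speed minimal geodesic joining `P₀` and `P₁`. -/
theorem mmd_geodesic_is_mixture
    {X : Type*} [MetricSpace X] [SeparableSpace X] [CompleteSpace X]
    [MeasurableSpace X] [BorelSpace X]
    {H : Type*} [NormedAddCommGroup H] [InnerProductSpace ℝ H] [CompleteSpace H]
    [MeasurableSpace H] [BorelSpace H]
    (Φ : X → H) (hΦ : Measurable Φ)
    (𝔐 : Set (Measure X))
    (hprob : ∀ P ∈ 𝔐, IsProbabilityMeasure P)
    (hint : ∀ P ∈ 𝔐, Integrable Φ P)
    (hconv : ∀ P₀ ∈ 𝔐, ∀ P₁ ∈ 𝔐, ∀ t ∈ Set.Icc (0 : ℝ) 1,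
      (ENNReal.ofReal (1 - t) • P₀ + ENNReal.ofReal t • P₁) ∈ 𝔐)
    (hinj : ∀ P ∈ 𝔐, ∀ P' ∈ 𝔐, (∫ x, Φ x ∂P) = (∫ x, Φ x ∂P') → P = P')
    (P₀ : Measure X) (hP₀ : P₀ ∈ 𝔐) (P₁ : Measure X) (hP₁ : P₁ ∈ 𝔐)
    (t : ℝ) (ht : t ∈ Set.Icc (0 : ℝ) 1)
    (P : Measure X) (hP : P ∈ 𝔐)
    (h0 : ‖(∫ x, Φ x ∂P₀) - ∫ x, Φ x ∂P‖
        = t * ‖(∫ x, Φ x ∂P₀) - ∫ x, Φ x ∂P₁‖)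
    (h1 : ‖(∫ x, Φ x ∂P) - ∫ x, Φ x ∂P₁‖
        = (1 - t) * ‖(∫ x, Φ x ∂P₀) - ∫ x, Φ x ∂P₁‖) :
    P = ENNReal.ofReal (1 - t) • P₀ + ENNReal.ofReal t • P₁ := by

  set a := ∫ x, Φ x ∂P₀ with ha
  set b := ∫ x, Φ x ∂P₁ with hb
  set c := ∫ x, Φ x ∂P with hc
  obtain ⟨ht0, ht1⟩ := ht
  have hQ : (ENNReal.ofReal (1 - t) • P₀ + ENNReal.ofReal t • P₁) ∈ 𝔐 :=
    hconv P₀ hP₀ P₁ hP₁ t ⟨ht0, ht1⟩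
  -- c = (1-t) • a + t • b
  have key : c = (1 - t) • a + t • b := by
    by_cases hw : b - a = 0
    · have hab : a = b := (sub_eq_zero.mp hw).symm
      have hca : a - c = 0 := by
        have : ‖a - c‖ = 0 := by rw [h0, ← hab, sub_self, norm_zero, mul_zero]
        exact norm_eq_zero.mp this
      have : c = a := (sub_eq_zero.mp hca).symm
      rw [this, ← hab, sub_smul, one_smul]; abel
    · have hray : SameRay ℝ (c - a) (b - c) := by
        apply sameRay_iff_norm_add.mpr
        have : c - a + (b - c) = b - a := by abel
        rw [this]
        have e0 : ‖c - a‖ = t * ‖b - a‖ := by rw [norm_sub_rev, norm_sub_rev b a]; exact h0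
        have e1 : ‖b - c‖ = (1 - t) * ‖b - a‖ := by rw [norm_sub_rev, norm_sub_rev b a]; exact h1
        rw [e0, e1]; ring
      have hray2 : SameRay ℝ (c - a) (b - a) := by
        have := (SameRay.refl (c - a)).add_right hray
        have hs : c - a + (b - c) = b - a := by abel
        rw [hs] at this
        exact this
      obtain ⟨r, hr0, hr⟩ := hray2.exists_nonneg_right hw
      have hnorm : ‖c - a‖ = r * ‖b - a‖ := by
        rw [hr, norm_smul, Real.norm_of_nonneg hr0]
      have e0 : ‖c - a‖ = t * ‖b - a‖ := by rw [norm_sub_rev, norm_sub_rev b a]; exact h0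
      have hbne : ‖b - a‖ ≠ 0 := norm_ne_zero_iff.mpr hw
      have hrt : r = t := by
        have := hnorm.symm.trans e0
        field_simp at this
        linarith
      have hca : c - a = t • (b - a) := by rw [hr, hrt]
      have hcc : c = a + t • (b - a) := by rw [← hca]; abel
      rw [hcc, smul_sub, sub_smul, one_smul]; abel
  -- mean of mixture
  have hmix : (∫ x, Φ x ∂(ENNReal.ofReal (1 - t) • P₀ + ENNReal.ofReal t • P₁))
      = (1 - t) • a + t • b := by
    rw [integral_add_measure]
    · rw [integral_smul_measure, integral_smul_measure,
        ENNReal.toReal_ofReal (by linarith), ENNReal.toReal_ofReal ht0]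
    · exact (hint P₀ hP₀).smul_measure ENNReal.ofReal_ne_top
    · exact (hint P₁ hP₁).smul_measure ENNReal.ofReal_ne_top
  exact hinj P hP _ hQ (by rw [hmix, ← key])
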